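/- Suppose Z ∈ ℂ and the initial data z_1(0),...,z_N(0) ∈ ℂ (not required to be nonzero) satisfy the N product-form constraints z_n(0) · [z_N(0)]^{M−1} · Z = ∑_{m} c_{n,m} ∏_{ℓ=1}^{N} [z_ℓ(0)]^{m_ℓ} for every n ∈ {1,...,N}, where the sum runs over all multi-indices m of degree M. Then z_n(s) := z_n(0) · [z_N(0)]^{M^s − 1} · Z^{e(s)} satisfies z_n(s+1) = ∑_{m} c_{n,m} ∏_{ℓ=1}^{N} [z_ℓ(s)]^{m_ℓ} for all n ∈ {1,...,N} and all s ∈ ℕ. -/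
import Mathlib


/-- Fix `N ≥ 1`, `M ≥ 2`, coefficients `c n m` and initial data `z0`
(not required to be nonzero). If `Z` satisfies the `N` product-form constraints
`z0 n * (z0 (N-1))^(M-1) * Z = ∑ₘ c n m ∏ₗ (z0 ℓ)^{mₗ}`, then
`z n s = z0 n * (z0 (N-1))^(M^s - 1) * Z^(e s)` (with `e s = ∑_{k<s} M^k`) solves the
system `z n (s+1) = ∑ₘ c n m ∏ₗ (z ℓ s)^{mₗ}`. -/
theorem solvable_system_homogeneous_polynomial_product_form
    (N M : ℕ) (hN : 1 ≤ N) (hM : 2 ≤ M)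
    (c : Fin N → (Fin N → ℕ) → ℂ)
    (z0 : Fin N → ℂ)
    (Z : ℂ)
    (hconstraint : ∀ n : Fin N,
      z0 n * (z0 ⟨N - 1, by omega⟩) ^ (M - 1) * Z =
        ∑ m ∈ Finset.Nat.antidiagonalTuple N M, c n m * ∏ ℓ, (z0 ℓ) ^ (m ℓ))
    (z : Fin N → ℕ → ℂ)
    (hz : ∀ n s, z n s =
      z0 n * (z0 ⟨N - 1, by omega⟩) ^ (M ^ s - 1) *
        Z ^ (∑ k ∈ Finset.range s, M ^ k)) :
    ∀ (n : Fin N) (s : ℕ),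
      z n (s + 1) =
        ∑ m ∈ Finset.Nat.antidiagonalTuple N M, c n m * ∏ ℓ, (z ℓ s) ^ (m ℓ) := by

  intro n s
  set A := z0 ⟨N - 1, by omega⟩ with hA
  set es := ∑ k ∈ Finset.range s, M ^ k with hes
  have ht : 1 ≤ M ^ s := Nat.one_le_pow _ _ (by omega)
  have hpow : M ^ (s + 1) = M ^ s * M := pow_succ M s
  have h1 : M - 1 + (M ^ s - 1) * M = M ^ (s + 1) - 1 := by
    have hle : M ≤ M ^ s * M := Nat.le_mul_of_pos_left M (by omega)
    rw [Nat.sub_mul, hpow]; omega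
  have h2 : (∑ k ∈ Finset.range (s + 1), M ^ k) = es * M + 1 := by
    rw [Finset.sum_range_succ']
    simp only [pow_zero, pow_succ, hes, Finset.sum_mul]
  have key : ∀ m ∈ Finset.Nat.antidiagonalTuple N M,
      (∏ ℓ, (z ℓ s) ^ (m ℓ)) =
        (∏ ℓ, (z0 ℓ) ^ (m ℓ)) * (A ^ (M ^ s - 1) * Z ^ es) ^ M := by
    intro m hm
    have hsum : ∑ ℓ, m ℓ = M := Finset.Nat.mem_antidiagonalTuple.mp hm
    calc (∏ ℓ, (z ℓ s) ^ (m ℓ))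
        = ∏ ℓ, ((z0 ℓ) * (A ^ (M ^ s - 1) * Z ^ es)) ^ (m ℓ) := by
          refine Finset.prod_congr rfl fun ℓ _ => ?_
          rw [hz ℓ s, ← hes, mul_assoc]
      _ = (∏ ℓ, (z0 ℓ) ^ (m ℓ)) * ∏ ℓ, (A ^ (M ^ s - 1) * Z ^ es) ^ (m ℓ) := by
          simp [mul_pow, Finset.prod_mul_distrib]
      _ = (∏ ℓ, (z0 ℓ) ^ (m ℓ)) * (A ^ (M ^ s - 1) * Z ^ es) ^ (∑ ℓ, m ℓ) := by
          rw [Finset.prod_pow_eq_pow_sum]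
      _ = (∏ ℓ, (z0 ℓ) ^ (m ℓ)) * (A ^ (M ^ s - 1) * Z ^ es) ^ M := by rw [hsum]
  rw [Finset.sum_congr rfl fun m hm => by rw [key m hm]]
  rw [show (∑ m ∈ Finset.Nat.antidiagonalTuple N M, c n m * ((∏ ℓ, (z0 ℓ) ^ (m ℓ)) *
        (A ^ (M ^ s - 1) * Z ^ es) ^ M)) =
      (∑ m ∈ Finset.Nat.antidiagonalTuple N M, c n m * ∏ ℓ, (z0 ℓ) ^ (m ℓ)) *
        (A ^ (M ^ s - 1) * Z ^ es) ^ M by rw [Finset.sum_mul]; exact Finset.sum_congr rfl fun m _ => by ring]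
  rw [← hconstraint n, hz, h2]
  rw [← h1, pow_add, pow_mul, mul_pow, pow_succ, pow_mul]
  ring
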